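/- Let 𝓕 be a map from the d×d Hermitian matrices to themselves satisfying U*𝓕(A)U = 𝓕(U*AU) for all Hermitian A and all unitary U. Define F : ℝ^d_≥ → ℝ^d by letting F(α) be the diagonal entries of 𝓕(Λ_α) (in particular 𝓕(Λ_α) is diagonal). Then F is block-constant, i.e. F_m(α) = F_n(α) whenever α_m = α_n, and 𝓕(A) = U_A diag(F(α)) U_A* for every Hermitian A, where A = U_A Λ_α U_A* is any spectral decomposition of A with α non-increasingly ordered. -/

import Mathlib

open Matrix

section Aux

variable {d : ℕ}

private lemma star_sign (i : Fin d) :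
    star (Matrix.diagonal (fun k => if k = i then (-1 : ℂ) else 1)) =
      Matrix.diagonal (fun k => if k = i then (-1 : ℂ) else 1) := by
  have hs : (star fun k : Fin d => if k = i then (-1 : ℂ) else 1) =
      fun k : Fin d => if k = i then (-1 : ℂ) else 1 := by
    funext k
    simp only [Pi.star_apply]
    split <;> simp
  rw [Matrix.star_eq_conjTranspose, Matrix.diagonal_conjTranspose, hs]

private lemma sign_unitary (i : Fin d) :
    (Matrix.diagonal (fun k => if k = i then (-1 : ℂ) else 1)) ∈
      Matrix.unitaryGroup (Fin d) ℂ := by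
  rw [Matrix.mem_unitaryGroup_iff, star_sign, Matrix.diagonal_mul_diagonal]
  have : (fun k : Fin d => (if k = i then (-1 : ℂ) else 1) *
      (if k = i then (-1 : ℂ) else 1)) = fun _ => (1 : ℂ) := by
    funext k; split <;> norm_num
  rw [this, Matrix.diagonal_one]

private lemma star_perm (σ : Equiv.Perm (Fin d)) :
    star (σ.permMatrix ℂ) = (σ⁻¹).permMatrix ℂ := by
  ext i j
  simp only [Matrix.star_eq_conjTranspose, Matrix.conjTranspose_apply,
    Equiv.Perm.permMatrix, PEquiv.toMatrix_apply, Equiv.toPEquiv_apply,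
    Option.mem_def, Option.some.injEq]
  by_cases h : σ j = i
  · have h2 : σ⁻¹ i = j := by rw [← h]; simp
    simp [h, h2]
  · have h2 : σ⁻¹ i ≠ j := fun hc => h (by rw [← hc]; simp)
    simp [h, h2]; exact h2

private lemma perm_unitary (σ : Equiv.Perm (Fin d)) :
    (σ.permMatrix ℂ) ∈ Matrix.unitaryGroup (Fin d) ℂ := by
  rw [Matrix.mem_unitaryGroup_iff, star_perm]
  show σ.toPEquiv.toMatrix * (σ⁻¹).toPEquiv.toMatrix = 1
  rw [PEquiv.toMatrix_toPEquiv_mul]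
  ext i j
  simp [PEquiv.toMatrix_apply, Equiv.toPEquiv_apply, Matrix.one_apply, eq_comm,
    Equiv.eq_symm_apply]

end Aux

/-- **Isotropic matrix functions come from block-constant vector fields.**
Let `𝓕` map Hermitian `d × d` matrices to Hermitian matrices and satisfy
`U* 𝓕(A) U = 𝓕(U* A U)` for all Hermitian `A` and unitary `U`.  Define
`F(α)` as the vector of diagonal entries of `𝓕(Λ_α)`.  Then:
(i) `𝓕(Λ_α)` is diagonal, (ii) `F` is block-constant (`F_m(α) = F_n(α)`
whenever `α_m = α_n`), and (iii) `𝓕(A) = U diag(F(α)) U*` for every spectral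
decomposition `A = U Λ_α U*` with `α` non-increasingly ordered. -/
theorem isotropic_eq_LF {d : ℕ}
    (𝓕 : Matrix (Fin d) (Fin d) ℂ → Matrix (Fin d) (Fin d) ℂ)
    (hHerm : ∀ A : Matrix (Fin d) (Fin d) ℂ, A.IsHermitian → (𝓕 A).IsHermitian)
    (hequiv : ∀ (A U : Matrix (Fin d) (Fin d) ℂ), A.IsHermitian →
      U ∈ Matrix.unitaryGroup (Fin d) ℂ →
      star U * 𝓕 A * U = 𝓕 (star U * A * U)) :
    (∀ α : Fin d → ℝ, Antitone α →
      𝓕 (Matrix.diagonal fun i => (α i : ℂ)) =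
        Matrix.diagonal (fun i => 𝓕 (Matrix.diagonal fun j => (α j : ℂ)) i i)) ∧
    (∀ α : Fin d → ℝ, Antitone α → ∀ m n : Fin d, α m = α n →
      𝓕 (Matrix.diagonal fun i => (α i : ℂ)) m m =
        𝓕 (Matrix.diagonal fun i => (α i : ℂ)) n n) ∧
    (∀ (A U : Matrix (Fin d) (Fin d) ℂ) (α : Fin d → ℝ), A.IsHermitian →
      U ∈ Matrix.unitaryGroup (Fin d) ℂ → Antitone α →
      A = U * Matrix.diagonal (fun i => (α i : ℂ)) * star U →
      𝓕 A = U * Matrix.diagonal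
        (fun i => 𝓕 (Matrix.diagonal fun j => (α j : ℂ)) i i) * star U) := by
  have hdiagHerm : ∀ α : Fin d → ℝ,
      (Matrix.diagonal fun i => (α i : ℂ)).IsHermitian := by
    intro α
    exact Matrix.isHermitian_diagonal_iff.mpr fun i => Complex.conj_ofReal (α i)
  -- part (i)
  have part1 : ∀ α : Fin d → ℝ, Antitone α →
      𝓕 (Matrix.diagonal fun i => (α i : ℂ)) =
        Matrix.diagonal (fun i => 𝓕 (Matrix.diagonal fun j => (α j : ℂ)) i i) := by
    intro α hα
    set Λ := Matrix.diagonal fun i => (α i : ℂ) with hΛ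
    ext i j
    by_cases hij : i = j
    · subst hij; simp [Matrix.diagonal_apply_eq]
    · rw [Matrix.diagonal_apply_ne _ hij]
      set e : Fin d → ℂ := fun k => if k = i then (-1 : ℂ) else 1 with he
      set D := Matrix.diagonal e with hD
      have hcom : star D * Λ * D = Λ := by
        have hfun : ∀ k, ((fun k => if k = i then (-1:ℂ) else 1) k * (α k : ℂ)) *
            (fun k => if k = i then (-1:ℂ) else 1) k = (α k : ℂ) := by
          intro k; by_cases h : k = i <;> simp [h]
        rw [hD, star_sign, hΛ, Matrix.diagonal_mul_diagonal,
          Matrix.diagonal_mul_diagonal]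
        exact congrArg Matrix.diagonal (funext fun k => hfun k)
      have h1 := hequiv Λ D (hdiagHerm α) (sign_unitary i)
      rw [hcom] at h1
      have h2 : e i * 𝓕 Λ i j * e j = 𝓕 Λ i j := by
        have := congrFun (congrFun h1 i) j
        rwa [hD, star_sign, Matrix.mul_diagonal, Matrix.diagonal_mul] at this
      have hei : e i = -1 := by simp [he]
      have hej : e j = 1 := by simp [he, Ne.symm hij]
      rw [hei, hej, mul_one] at h2
      linear_combination (-1/2 : ℂ) * h2
  refine ⟨part1, ?_, ?_⟩
  · -- part (ii)
    intro α hα m n hmn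
    set Λ := Matrix.diagonal fun i => (α i : ℂ) with hΛ
    set σ := Equiv.swap m n with hσ
    have hσinv : σ⁻¹ = σ := by
      rw [hσ]; exact Equiv.ext fun x => by rw [← Equiv.symm_swap]; rfl
    have hcomp : ∀ k, (α (σ k) : ℂ) = (α k : ℂ) := by
      intro k
      rw [hσ]
      rcases eq_or_ne k m with rfl | hkm
      · rw [Equiv.swap_apply_left, hmn]
      rcases eq_or_ne k n with rfl | hkn
      · rw [Equiv.swap_apply_right, hmn]
      · rw [Equiv.swap_apply_of_ne_of_ne hkm hkn]
    have hsub : star (σ.permMatrix ℂ) * Λ * (σ.permMatrix ℂ) = Λ := by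
      rw [star_perm, hσinv]
      show σ.toPEquiv.toMatrix * Λ * σ.toPEquiv.toMatrix = Λ
      rw [PEquiv.toMatrix_toPEquiv_mul, PEquiv.mul_toMatrix_toPEquiv]
      ext i j
      rw [Matrix.submatrix_apply, Matrix.submatrix_apply, hΛ,
        Matrix.diagonal_apply, Matrix.diagonal_apply]
      have hss : σ.symm = σ := by rw [← hσinv]; rfl
      rw [hss]
      by_cases h : i = j
      · subst h
        simp [hcomp]
      · have : σ i ≠ σ j := fun hc => h (σ.injective hc)
        simp [h, this]
    have h1 := hequiv Λ (σ.permMatrix ℂ) (hdiagHerm α) (perm_unitary σ)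
    rw [hsub, star_perm, hσinv] at h1
    rw [show (σ.permMatrix ℂ) * 𝓕 Λ * (σ.permMatrix ℂ)
        = ((𝓕 Λ).submatrix σ id) * (σ.permMatrix ℂ) by
          rw [PEquiv.toMatrix_toPEquiv_mul],
      PEquiv.mul_toMatrix_toPEquiv] at h1
    have := congrFun (congrFun h1 m) m
    rw [Matrix.submatrix_apply, Matrix.submatrix_apply] at this
    have hss : σ.symm = σ := by rw [← hσinv]; rfl
    rw [hss, hσ] at this
    simp only [Equiv.swap_apply_left, id_eq] at this
    exact this.symm
  · -- part (iii)
    intro A U α hA hU hα hAeq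
    set Λ := Matrix.diagonal fun i => (α i : ℂ) with hΛ
    have hU1 : U * star U = 1 := Matrix.mem_unitaryGroup_iff.mp hU
    have hU2 : star U * U = 1 := Matrix.mem_unitaryGroup_iff'.mp hU
    have hconj : star U * A * U = Λ := by
      rw [hAeq]
      calc star U * (U * Λ * star U) * U
          = (star U * U) * Λ * (star U * U) := by noncomm_ring
        _ = Λ := by rw [hU2, one_mul, mul_one]
    have h1 := hequiv A U hA hU
    rw [hconj] at h1
    have h2 : 𝓕 A = U * 𝓕 Λ * star U := by
      have := congrArg (fun M => U * M * star U) h1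
      calc 𝓕 A = (U * star U) * 𝓕 A * (U * star U) := by rw [hU1, one_mul, mul_one]
        _ = U * (star U * 𝓕 A * U) * star U := by noncomm_ring
        _ = U * 𝓕 Λ * star U := by rw [h1]
    rw [h2, part1 α hα]
    simp [Matrix.diagonal_apply_eq]
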